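/- Let f₁ and f₂ be multiplicative functions ℕ → ℂ such that, for j = 1,2, f_j satisfies with respect to an integer m_j ≥ 1 the conditions: (i) for some prime q dividing m_j, ∑_{k=0}^∞ f_j(q^k)/q^k = 0; (ii) for each prime power p^a exactly dividing m_j, f_j(p^k) = f_j(p^a) for all k ≥ a; (iii) for each prime p with gcd(p,m_j) = 1, f_j(p^k) = 1 for all k ≥ 1. Let g = f₁ ∗ f₂ ∗ μ ∗ μ, where μ is the Möbius function. Then for every ε > 0, ∑_{n≤x} |g(n)| = O_ε(x^ε) as x → ∞. -/

import Mathlib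

open Filter Asymptotics

/-- `f` is multiplicative: `f 1 = 1` and `f (m*n) = f m * f n` for coprime `m, n`. -/
def IsMultiplicativeFn (f : ℕ → ℂ) : Prop :=
  f 1 = 1 ∧ ∀ m n : ℕ, Nat.Coprime m n → f (m * n) = f m * f n

/-- Conditions i-iii of Theorem 2 with respect to the integer `m`. -/
def SatisfiesConds (f : ℕ → ℂ) (m : ℕ) : Prop :=
  (∃ q : ℕ, q.Prime ∧ q ∣ m ∧ ∑' k : ℕ, f (q ^ k) / (q : ℂ) ^ k = 0) ∧
  (∀ p a : ℕ, p.Prime → p ^ a ∣ m → ¬ p ^ (a + 1) ∣ m →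
    ∀ k : ℕ, a ≤ k → f (p ^ k) = f (p ^ a)) ∧
  (∀ p : ℕ, p.Prime → Nat.Coprime p m → ∀ k : ℕ, 1 ≤ k → f (p ^ k) = 1)

/-- Dirichlet convolution. -/
noncomputable def dconv (f g : ℕ → ℂ) : ℕ → ℂ :=
  fun n => ∑ d ∈ n.divisors, f d * g (n / d)

/-- The Möbius function, complex valued. -/
def moebiusC : ℕ → ℂ := fun n => ((ArithmeticFunction.moebius n : ℤ) : ℂ)

/-- Auxiliary: view an `ℕ → ℂ` as an arithmetic function (zeroing it at 0). -/
noncomputable def toAF (f : ℕ → ℂ) : ArithmeticFunction ℂ :=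
  ⟨fun n => if n = 0 then 0 else f n, rfl⟩

lemma toAF_apply (f : ℕ → ℂ) {n : ℕ} (hn : n ≠ 0) : toAF f n = f n := if_neg hn

lemma toAF_mult {f : ℕ → ℂ} (hf : IsMultiplicativeFn f) : (toAF f).IsMultiplicative := by
  constructor
  · simpa [toAF_apply f one_ne_zero] using hf.1
  · intro m n hmn
    rcases eq_or_ne m 0 with rfl | hm
    · have : n = 1 := by simpa using hmn
      subst this
      simp [toAF]
    rcases eq_or_ne n 0 with rfl | hn
    · have : m = 1 := by simpa [Nat.coprime_zero_right] using hmn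
      subst this
      simp [toAF]
    rw [toAF_apply f (mul_ne_zero hm hn), toAF_apply f hm, toAF_apply f hn]
    exact hf.2 m n hmn

noncomputable def MC : ArithmeticFunction ℂ :=
  ((ArithmeticFunction.moebius : ArithmeticFunction ℤ) : ArithmeticFunction ℂ)

lemma MC_apply (n : ℕ) : MC n = moebiusC n := by
  simp [MC, moebiusC, ArithmeticFunction.intCoe_apply]

def Agrees (f : ℕ → ℂ) (F : ArithmeticFunction ℂ) : Prop := ∀ n : ℕ, n ≠ 0 → f n = F n

lemma agrees_dconv {f g : ℕ → ℂ} {F G : ArithmeticFunction ℂ}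
    (hf : Agrees f F) (hg : Agrees g G) : Agrees (dconv f g) (F * G) := by
  intro n hn
  rw [ArithmeticFunction.mul_apply, Nat.sum_divisorsAntidiagonal (fun d e => F d * G e)]
  unfold dconv
  refine Finset.sum_congr rfl fun d hd => ?_
  have hd' := Nat.mem_divisors.mp hd
  have hdne : d ≠ 0 := by
    rintro rfl
    exact hn (Nat.eq_zero_of_zero_dvd hd'.1)
  have hq : n / d ≠ 0 := by
    have := Nat.div_pos (Nat.le_of_dvd (Nat.pos_of_ne_zero hn) hd'.1) (Nat.pos_of_ne_zero hdne)
    omega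
  rw [hf d hdne, hg (n / d) hq]

/-- `(F * μ)(p^k) = F(p^k) - F(p^{k-1})` for `k ≥ 1`. -/
lemma mulM_prime_pow (F : ArithmeticFunction ℂ) {p : ℕ} (hp : p.Prime) (k : ℕ) :
    (F * MC) (p ^ (k + 1)) = F (p ^ (k + 1)) - F (p ^ k) := by
  rw [ArithmeticFunction.mul_apply,
    Nat.sum_divisorsAntidiagonal (fun d e => F d * MC e),
    Nat.sum_divisors_prime_pow hp]
  have key : ∀ i ∈ Finset.range (k + 2),
      F (p ^ i) * MC (p ^ (k + 1) / p ^ i) =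
        (if i = k + 1 then F (p ^ (k + 1)) else 0) + (if i = k then -F (p ^ k) else 0) := by
    intro i hi
    have hik : i ≤ k + 1 := by simpa [Nat.lt_succ_iff] using Finset.mem_range.mp hi
    have hdiv : p ^ (k + 1) / p ^ i = p ^ (k + 1 - i) := Nat.pow_div hik hp.pos
    rw [hdiv]
    rcases eq_or_ne i (k + 1) with rfl | h1
    · simp [MC_apply, moebiusC]
    rcases eq_or_ne i k with h2 | h2
    · have e : k + 1 - i = 1 := by omega
      rw [e, h2]
      simp [MC_apply, moebiusC, ArithmeticFunction.moebius_apply_prime hp, h1, h2.symm ▸ h1]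
    · have h3 : k + 1 - i ≠ 0 := by omega
      have h4 : k + 1 - i ≠ 1 := by omega
      rw [MC_apply]
      simp [moebiusC, ArithmeticFunction.moebius_apply_prime_pow hp h3, h4, h1, h2]
  rw [Finset.sum_congr rfl key, Finset.sum_add_distrib, Finset.sum_ite_eq'
    (Finset.range (k + 2)), Finset.sum_ite_eq' (Finset.range (k + 2))]
  have h1 : k + 1 ∈ Finset.range (k + 2) := by simp
  have h2 : k ∈ Finset.range (k + 2) := by simp [Nat.lt_succ_iff]
  rw [if_pos h1, if_pos h2]
  ring

/-- Under condition (ii), `(toAF f * μ)(p^k) = 0` for `k > v_p(m)`. -/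
lemma vanish_prime_pow {f : ℕ → ℂ} {m : ℕ} (hm : m ≠ 0) (hc : SatisfiesConds f m)
    {p : ℕ} (hp : p.Prime) {k : ℕ} (hk : m.factorization p < k) :
    (toAF f * MC) (p ^ k) = 0 := by
  obtain ⟨k, rfl⟩ : ∃ j, k = j + 1 := ⟨k - 1, by omega⟩
  rw [mulM_prime_pow _ hp]
  set a := m.factorization p with ha
  have hstab := hc.2.1 p a hp (Nat.ordProj_dvd m p) (Nat.pow_succ_factorization_not_dvd hm hp)
  have e1 : f (p ^ (k + 1)) = f (p ^ a) := hstab (k + 1) (by omega)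
  have e2 : f (p ^ k) = f (p ^ a) := hstab k (by omega)
  have hpk : p ^ (k + 1) ≠ 0 := pow_ne_zero _ hp.pos.ne'
  have hpk' : p ^ k ≠ 0 := pow_ne_zero _ hp.pos.ne'
  rw [toAF_apply f hpk, toAF_apply f hpk', e1, e2, sub_self]

theorem stmt_8 (f₁ f₂ : ℕ → ℂ) (m₁ m₂ : ℕ) (hm₁ : 1 ≤ m₁) (hm₂ : 1 ≤ m₂)
    (hmul₁ : IsMultiplicativeFn f₁) (hmul₂ : IsMultiplicativeFn f₂)
    (h₁ : SatisfiesConds f₁ m₁) (h₂ : SatisfiesConds f₂ m₂) :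
    ∀ ε : ℝ, 0 < ε →
      (fun x : ℝ =>
          ∑ n ∈ Finset.Icc 1 ⌊x⌋₊, ‖dconv (dconv (dconv f₁ f₂) moebiusC) moebiusC n‖)
        =O[atTop] fun x : ℝ => x ^ ε := by
  intro ε hε
  have hm₁0 : m₁ ≠ 0 := by omega
  have hm₂0 : m₂ ≠ 0 := by omega
  set M := m₁ * m₂ with hM
  have hM0 : M ≠ 0 := mul_ne_zero hm₁0 hm₂0
  set g : ℕ → ℂ := dconv (dconv (dconv f₁ f₂) moebiusC) moebiusC with hg
  set G : ArithmeticFunction ℂ := toAF f₁ * toAF f₂ * MC * MC with hG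
  -- g agrees with G on nonzero naturals
  have hagree : Agrees g G := by
    have a1 : Agrees f₁ (toAF f₁) := fun n hn => (toAF_apply f₁ hn).symm
    have a2 : Agrees f₂ (toAF f₂) := fun n hn => (toAF_apply f₂ hn).symm
    have aM : Agrees moebiusC MC := fun n _ => (MC_apply n).symm
    exact agrees_dconv (agrees_dconv (agrees_dconv a1 a2) aM) aM
  -- G = (toAF f₁ * MC) * (toAF f₂ * MC)
  have hGeq : G = (toAF f₁ * MC) * (toAF f₂ * MC) := by rw [hG]; ring
  have hGmult : G.IsMultiplicative := by
    rw [hGeq]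
    exact ((toAF_mult hmul₁).mul (ArithmeticFunction.isMultiplicative_moebius.intCast)).mul
      ((toAF_mult hmul₂).mul (ArithmeticFunction.isMultiplicative_moebius.intCast))
  -- G vanishes at prime powers beyond v_p(M)
  have hGvanish : ∀ p k : ℕ, p.Prime → M.factorization p < k → G (p ^ k) = 0 := by
    intro p k hp hk
    rw [hGeq, ArithmeticFunction.mul_apply,
      Nat.sum_divisorsAntidiagonal (fun d e => (toAF f₁ * MC) d * (toAF f₂ * MC) e),
      Nat.sum_divisors_prime_pow hp]
    refine Finset.sum_eq_zero fun i hi => ?_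
    have hik : i ≤ k := by simpa [Nat.lt_succ_iff] using Finset.mem_range.mp hi
    have hdiv : p ^ k / p ^ i = p ^ (k - i) := Nat.pow_div hik hp.pos
    rw [hdiv]
    have hfac : M.factorization p = m₁.factorization p + m₂.factorization p := by
      rw [hM, Nat.factorization_mul hm₁0 hm₂0]; rfl
    rcases lt_or_ge (m₁.factorization p) i with h | h
    · rw [vanish_prime_pow hm₁0 h₁ hp h, zero_mul]
    · have : m₂.factorization p < k - i := by omega
      rw [vanish_prime_pow hm₂0 h₂ hp this, mul_zero]
  -- hence G n = 0 unless n ∣ M (for n ≠ 0)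
  have hsupp : ∀ n : ℕ, n ≠ 0 → ¬ n ∣ M → G n = 0 := by
    intro n hn hdvd
    have : ¬ n.factorization ≤ M.factorization := by
      rw [Nat.factorization_le_iff_dvd hn hM0]; exact hdvd
    obtain ⟨p, hpv⟩ := not_forall.mp this
    push_neg at hpv
    have hpsupp : p ∈ n.factorization.support := Finsupp.mem_support_iff.mpr (by omega)
    have hp : p.Prime := Nat.prime_of_mem_primeFactors ((Nat.support_factorization n) ▸ hpsupp)
    rw [hGmult.multiplicative_factorization G hn]
    exact Finset.prod_eq_zero hpsupp (hGvanish p _ hp hpv)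
  -- the sum is bounded by a constant C
  set C : ℝ := ∑ n ∈ M.divisors, ‖g n‖ with hC
  have hbound : ∀ x : ℝ, ∑ n ∈ Finset.Icc 1 ⌊x⌋₊, ‖g n‖ ≤ C := by
    intro x
    have step1 : ∑ n ∈ (Finset.Icc 1 ⌊x⌋₊).filter (· ∣ M), ‖g n‖
        = ∑ n ∈ Finset.Icc 1 ⌊x⌋₊, ‖g n‖ := by
      refine Finset.sum_filter_of_ne fun n hn hne => ?_
      by_contra hdvd
      have hn0 : n ≠ 0 := by
        have := (Finset.mem_Icc.mp hn).1; omega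
      have : g n = 0 := by rw [hagree n hn0, hsupp n hn0 hdvd]
      exact hne (by rw [this, norm_zero])
    rw [← step1]
    refine Finset.sum_le_sum_of_subset_of_nonneg ?_ (fun n _ _ => norm_nonneg _)
    intro n hn
    obtain ⟨hn1, hn2⟩ := Finset.mem_filter.mp hn
    exact Nat.mem_divisors.mpr ⟨hn2, hM0⟩
  have hC0 : 0 ≤ C := Finset.sum_nonneg fun n _ => norm_nonneg _
  rw [isBigO_iff]
  refine ⟨C, ?_⟩
  filter_upwards [eventually_ge_atTop (1 : ℝ)] with x hx
  have h1 : (1 : ℝ) ≤ x ^ ε := Real.one_le_rpow hx hε.le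
  have h2 : ‖x ^ ε‖ = x ^ ε := Real.norm_of_nonneg (by positivity)
  calc ‖∑ n ∈ Finset.Icc 1 ⌊x⌋₊, ‖g n‖‖
      = ∑ n ∈ Finset.Icc 1 ⌊x⌋₊, ‖g n‖ :=
        Real.norm_of_nonneg (Finset.sum_nonneg fun n _ => norm_nonneg _)
    _ ≤ C := hbound x
    _ ≤ C * ‖x ^ ε‖ := by rw [h2]; nlinarith
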